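/- Locality for sl₃: with the lattice W₃ generators τᵢ obtained from τ₁ by i−1 shifts along the chain X₁,Y₁,X₂,Y₂,…, and the Poisson bracket determined by {Xᵢ,Xⱼ}=2XᵢXⱼ (i<j), {Yᵢ,Yⱼ}=2YᵢYⱼ (i<j), {Xᵢ,Yⱼ}=XᵢYⱼ (i>j), {Xᵢ,Yⱼ}=−XᵢYⱼ (i≤j), one has {τ₁,τ₇} = 0, where τ₇ = τ₁ with all indices shifted by 3 (Xᵢ↦Xᵢ₊₃, Yᵢ↦Yᵢ₊₃). -/

import Mathlib

/-- Partial derivative with respect to the `k`-th `X`-variable (variables indexed by `ℕ`,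
1-based; index `0` is unused). -/
noncomputable def pdX (f : (ℕ → ℝ) → (ℕ → ℝ) → ℝ) (k : ℕ) (x y : ℕ → ℝ) : ℝ :=
  deriv (fun t => f (Function.update x k t) y) (x k)

/-- Partial derivative with respect to the `k`-th `Y`-variable. -/
noncomputable def pdY (f : (ℕ → ℝ) → (ℕ → ℝ) → ℝ) (k : ℕ) (x y : ℕ → ℝ) : ℝ :=
  deriv (fun t => f x (Function.update y k t)) (y k)

/-- Poisson bracket determined by `{Xₐ,X_b} = 2XₐX_b` (a < b), `{Yₐ,Y_b} = 2YₐY_b` (a < b),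
`{Xₐ,Y_b} = XₐY_b` if `a > b` and `−XₐY_b` if `a ≤ b`, extended to functions by the
Leibniz rule; the sums run over indices `0, …, N−1`, covering the supports involved. -/
noncomputable def pbXY (N : ℕ) (f g : (ℕ → ℝ) → (ℕ → ℝ) → ℝ) (x y : ℕ → ℝ) : ℝ :=
  (∑ a ∈ Finset.range N, ∑ b ∈ Finset.range N,
    if a < b then (pdX f a x y * pdX g b x y - pdX f b x y * pdX g a x y)
      * (2 * x a * x b) else 0)
  + (∑ a ∈ Finset.range N, ∑ b ∈ Finset.range N,
    if a < b then (pdY f a x y * pdY g b x y - pdY f b x y * pdY g a x y)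
      * (2 * y a * y b) else 0)
  + (∑ a ∈ Finset.range N, ∑ b ∈ Finset.range N,
    (pdX f a x y * pdY g b x y - pdY f b x y * pdX g a x y)
      * (if b < a then x a * y b else -(x a * y b)))

/-- The first `sl₃` lattice `W₃` generator `τ₁`. -/
noncomputable def t1 (x y : ℕ → ℝ) : ℝ :=
  x 2 * y 2 * (x 3 * y 3 + x 2 * (y 2 + y 3) + x 1 * (y 1 + y 2 + y 3)) /
    ((x 2 * y 2 + x 1 * (y 1 + y 2)) * (x 3 * y 3 + x 2 * (y 2 + y 3)))

/-- `τ₇`, i.e. `τ₁` with all indices shifted by `3` (`Xᵢ ↦ Xᵢ₊₃`, `Yᵢ ↦ Yᵢ₊₃`). -/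
noncomputable def t7 (x y : ℕ → ℝ) : ℝ :=
  x 5 * y 5 * (x 6 * y 6 + x 5 * (y 5 + y 6) + x 4 * (y 4 + y 5 + y 6)) /
    ((x 5 * y 5 + x 4 * (y 4 + y 5)) * (x 6 * y 6 + x 5 * (y 5 + y 6)))


private lemma dq (a0 a1 a2 b0 b1 c0 c1 t : ℝ) (hb : b0 + b1 * t ≠ 0) (hc : c0 + c1 * t ≠ 0) :
    deriv (fun s => (a0 + a1 * s + a2 * s ^ 2) / ((b0 + b1 * s) * (c0 + c1 * s))) t =
      ((a1 + 2 * a2 * t) * ((b0 + b1 * t) * (c0 + c1 * t))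
        - (a0 + a1 * t + a2 * t ^ 2) * (b1 * (c0 + c1 * t) + (b0 + b1 * t) * c1))
        / ((b0 + b1 * t) * (c0 + c1 * t)) ^ 2 := by
  have hN : HasDerivAt (fun s : ℝ => a0 + a1 * s + a2 * s ^ 2) (a1 + 2 * a2 * t) t := by
    have h := ((hasDerivAt_const t a0).add ((hasDerivAt_id t).const_mul a1)).add
      ((hasDerivAt_pow 2 t).const_mul a2)
    have hv : a1 + a2 * (2 * t) = a1 + 2 * a2 * t := by ring
    rw [← hv]
    exact h.congr_deriv (by norm_num)
  have hB : HasDerivAt (fun s : ℝ => b0 + b1 * s) b1 t := by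
    exact ((hasDerivAt_const t b0).add ((hasDerivAt_id t).const_mul b1)).congr_deriv (by simp)
  have hC : HasDerivAt (fun s : ℝ => c0 + c1 * s) c1 t := by
    exact ((hasDerivAt_const t c0).add ((hasDerivAt_id t).const_mul c1)).congr_deriv (by simp)
  have hD : HasDerivAt (fun s : ℝ => (b0 + b1 * s) * (c0 + c1 * s))
      (b1 * (c0 + c1 * t) + (b0 + b1 * t) * c1) t := hB.mul hC
  exact (hN.div hD (mul_ne_zero hb hc)).deriv


private lemma pdX_t1_1 (x y : ℕ → ℝ) (h1 : x 2 * y 2 + x 1 * (y 1 + y 2) ≠ 0) (h2 : x 3 * y 3 + x 2 * (y 2 + y 3) ≠ 0) :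
    pdX t1 1 x y =
      ((x 2 * y 2 * (y 1 + y 2 + y 3) + 2 * (0) * (x 1)) * ((x 2 * y 2 + (y 1 + y 2) * (x 1)) * (x 3 * y 3 + x 2 * (y 2 + y 3) + (0) * (x 1)))
        - (x 2 * y 2 * (x 3 * y 3 + x 2 * (y 2 + y 3)) + (x 2 * y 2 * (y 1 + y 2 + y 3)) * (x 1) + (0) * (x 1) ^ 2) * ((y 1 + y 2) * (x 3 * y 3 + x 2 * (y 2 + y 3) + (0) * (x 1)) + (x 2 * y 2 + (y 1 + y 2) * (x 1)) * (0)))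
        / ((x 2 * y 2 + (y 1 + y 2) * (x 1)) * (x 3 * y 3 + x 2 * (y 2 + y 3) + (0) * (x 1))) ^ 2 := by
  have hb : (x 2 * y 2) + (y 1 + y 2) * (x 1) ≠ 0 := by intro h; apply h1; linear_combination h
  have hc : (x 3 * y 3 + x 2 * (y 2 + y 3)) + (0) * (x 1) ≠ 0 := by intro h; apply h2; linear_combination h
  have hrw : (fun s => t1 (Function.update x 1 s) y) =
      (fun s => ((x 2 * y 2 * (x 3 * y 3 + x 2 * (y 2 + y 3))) + (x 2 * y 2 * (y 1 + y 2 + y 3)) * s + (0) * s ^ 2) / (((x 2 * y 2) + (y 1 + y 2) * s) * ((x 3 * y 3 + x 2 * (y 2 + y 3)) + (0) * s))) := by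
    funext s
    simp [t1, Function.update_apply]
    try ring
  unfold pdX
  rw [hrw, dq _ _ _ _ _ _ _ _ hb hc]


private lemma pdX_t1_2 (x y : ℕ → ℝ) (h1 : x 2 * y 2 + x 1 * (y 1 + y 2) ≠ 0) (h2 : x 3 * y 3 + x 2 * (y 2 + y 3) ≠ 0) :
    pdX t1 2 x y =
      ((y 2 * (x 3 * y 3 + x 1 * (y 1 + y 2 + y 3)) + 2 * (y 2 * (y 2 + y 3)) * (x 2)) * ((x 1 * (y 1 + y 2) + (y 2) * (x 2)) * (x 3 * y 3 + (y 2 + y 3) * (x 2)))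
        - (0 + (y 2 * (x 3 * y 3 + x 1 * (y 1 + y 2 + y 3))) * (x 2) + (y 2 * (y 2 + y 3)) * (x 2) ^ 2) * ((y 2) * (x 3 * y 3 + (y 2 + y 3) * (x 2)) + (x 1 * (y 1 + y 2) + (y 2) * (x 2)) * (y 2 + y 3)))
        / ((x 1 * (y 1 + y 2) + (y 2) * (x 2)) * (x 3 * y 3 + (y 2 + y 3) * (x 2))) ^ 2 := by
  have hb : (x 1 * (y 1 + y 2)) + (y 2) * (x 2) ≠ 0 := by intro h; apply h1; linear_combination h
  have hc : (x 3 * y 3) + (y 2 + y 3) * (x 2) ≠ 0 := by intro h; apply h2; linear_combination h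
  have hrw : (fun s => t1 (Function.update x 2 s) y) =
      (fun s => ((0) + (y 2 * (x 3 * y 3 + x 1 * (y 1 + y 2 + y 3))) * s + (y 2 * (y 2 + y 3)) * s ^ 2) / (((x 1 * (y 1 + y 2)) + (y 2) * s) * ((x 3 * y 3) + (y 2 + y 3) * s))) := by
    funext s
    simp [t1, Function.update_apply]
    try ring
  unfold pdX
  rw [hrw, dq _ _ _ _ _ _ _ _ hb hc]


private lemma pdX_t1_3 (x y : ℕ → ℝ) (h1 : x 2 * y 2 + x 1 * (y 1 + y 2) ≠ 0) (h2 : x 3 * y 3 + x 2 * (y 2 + y 3) ≠ 0) :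
    pdX t1 3 x y =
      ((x 2 * y 2 * y 3 + 2 * (0) * (x 3)) * ((x 2 * y 2 + x 1 * (y 1 + y 2) + (0) * (x 3)) * (x 2 * (y 2 + y 3) + (y 3) * (x 3)))
        - (x 2 * y 2 * (x 2 * (y 2 + y 3) + x 1 * (y 1 + y 2 + y 3)) + (x 2 * y 2 * y 3) * (x 3) + (0) * (x 3) ^ 2) * ((0) * (x 2 * (y 2 + y 3) + (y 3) * (x 3)) + (x 2 * y 2 + x 1 * (y 1 + y 2) + (0) * (x 3)) * (y 3)))
        / ((x 2 * y 2 + x 1 * (y 1 + y 2) + (0) * (x 3)) * (x 2 * (y 2 + y 3) + (y 3) * (x 3))) ^ 2 := by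
  have hb : (x 2 * y 2 + x 1 * (y 1 + y 2)) + (0) * (x 3) ≠ 0 := by intro h; apply h1; linear_combination h
  have hc : (x 2 * (y 2 + y 3)) + (y 3) * (x 3) ≠ 0 := by intro h; apply h2; linear_combination h
  have hrw : (fun s => t1 (Function.update x 3 s) y) =
      (fun s => ((x 2 * y 2 * (x 2 * (y 2 + y 3) + x 1 * (y 1 + y 2 + y 3))) + (x 2 * y 2 * y 3) * s + (0) * s ^ 2) / (((x 2 * y 2 + x 1 * (y 1 + y 2)) + (0) * s) * ((x 2 * (y 2 + y 3)) + (y 3) * s))) := by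
    funext s
    simp [t1, Function.update_apply]
    try ring
  unfold pdX
  rw [hrw, dq _ _ _ _ _ _ _ _ hb hc]


private lemma pdY_t1_1 (x y : ℕ → ℝ) (h1 : x 2 * y 2 + x 1 * (y 1 + y 2) ≠ 0) (h2 : x 3 * y 3 + x 2 * (y 2 + y 3) ≠ 0) :
    pdY t1 1 x y =
      ((x 2 * y 2 * x 1 + 2 * (0) * (y 1)) * ((x 2 * y 2 + x 1 * y 2 + (x 1) * (y 1)) * (x 3 * y 3 + x 2 * (y 2 + y 3) + (0) * (y 1)))
        - (x 2 * y 2 * (x 3 * y 3 + x 2 * (y 2 + y 3) + x 1 * (y 2 + y 3)) + (x 2 * y 2 * x 1) * (y 1) + (0) * (y 1) ^ 2) * ((x 1) * (x 3 * y 3 + x 2 * (y 2 + y 3) + (0) * (y 1)) + (x 2 * y 2 + x 1 * y 2 + (x 1) * (y 1)) * (0)))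
        / ((x 2 * y 2 + x 1 * y 2 + (x 1) * (y 1)) * (x 3 * y 3 + x 2 * (y 2 + y 3) + (0) * (y 1))) ^ 2 := by
  have hb : (x 2 * y 2 + x 1 * y 2) + (x 1) * (y 1) ≠ 0 := by intro h; apply h1; linear_combination h
  have hc : (x 3 * y 3 + x 2 * (y 2 + y 3)) + (0) * (y 1) ≠ 0 := by intro h; apply h2; linear_combination h
  have hrw : (fun s => t1 x (Function.update y 1 s)) =
      (fun s => ((x 2 * y 2 * (x 3 * y 3 + x 2 * (y 2 + y 3) + x 1 * (y 2 + y 3))) + (x 2 * y 2 * x 1) * s + (0) * s ^ 2) / (((x 2 * y 2 + x 1 * y 2) + (x 1) * s) * ((x 3 * y 3 + x 2 * (y 2 + y 3)) + (0) * s))) := by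
    funext s
    simp [t1, Function.update_apply]
    try ring
  unfold pdY
  rw [hrw, dq _ _ _ _ _ _ _ _ hb hc]


private lemma pdY_t1_2 (x y : ℕ → ℝ) (h1 : x 2 * y 2 + x 1 * (y 1 + y 2) ≠ 0) (h2 : x 3 * y 3 + x 2 * (y 2 + y 3) ≠ 0) :
    pdY t1 2 x y =
      ((x 2 * (x 3 * y 3 + x 2 * y 3 + x 1 * (y 1 + y 3)) + 2 * (x 2 * (x 2 + x 1)) * (y 2)) * ((x 1 * y 1 + (x 2 + x 1) * (y 2)) * (x 3 * y 3 + x 2 * y 3 + (x 2) * (y 2)))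
        - (0 + (x 2 * (x 3 * y 3 + x 2 * y 3 + x 1 * (y 1 + y 3))) * (y 2) + (x 2 * (x 2 + x 1)) * (y 2) ^ 2) * ((x 2 + x 1) * (x 3 * y 3 + x 2 * y 3 + (x 2) * (y 2)) + (x 1 * y 1 + (x 2 + x 1) * (y 2)) * (x 2)))
        / ((x 1 * y 1 + (x 2 + x 1) * (y 2)) * (x 3 * y 3 + x 2 * y 3 + (x 2) * (y 2))) ^ 2 := by
  have hb : (x 1 * y 1) + (x 2 + x 1) * (y 2) ≠ 0 := by intro h; apply h1; linear_combination h
  have hc : (x 3 * y 3 + x 2 * y 3) + (x 2) * (y 2) ≠ 0 := by intro h; apply h2; linear_combination h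
  have hrw : (fun s => t1 x (Function.update y 2 s)) =
      (fun s => ((0) + (x 2 * (x 3 * y 3 + x 2 * y 3 + x 1 * (y 1 + y 3))) * s + (x 2 * (x 2 + x 1)) * s ^ 2) / (((x 1 * y 1) + (x 2 + x 1) * s) * ((x 3 * y 3 + x 2 * y 3) + (x 2) * s))) := by
    funext s
    simp [t1, Function.update_apply]
    try ring
  unfold pdY
  rw [hrw, dq _ _ _ _ _ _ _ _ hb hc]


private lemma pdY_t1_3 (x y : ℕ → ℝ) (h1 : x 2 * y 2 + x 1 * (y 1 + y 2) ≠ 0) (h2 : x 3 * y 3 + x 2 * (y 2 + y 3) ≠ 0) :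
    pdY t1 3 x y =
      ((x 2 * y 2 * (x 3 + x 2 + x 1) + 2 * (0) * (y 3)) * ((x 2 * y 2 + x 1 * (y 1 + y 2) + (0) * (y 3)) * (x 2 * y 2 + (x 3 + x 2) * (y 3)))
        - (x 2 * y 2 * (x 2 * y 2 + x 1 * (y 1 + y 2)) + (x 2 * y 2 * (x 3 + x 2 + x 1)) * (y 3) + (0) * (y 3) ^ 2) * ((0) * (x 2 * y 2 + (x 3 + x 2) * (y 3)) + (x 2 * y 2 + x 1 * (y 1 + y 2) + (0) * (y 3)) * (x 3 + x 2)))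
        / ((x 2 * y 2 + x 1 * (y 1 + y 2) + (0) * (y 3)) * (x 2 * y 2 + (x 3 + x 2) * (y 3))) ^ 2 := by
  have hb : (x 2 * y 2 + x 1 * (y 1 + y 2)) + (0) * (y 3) ≠ 0 := by intro h; apply h1; linear_combination h
  have hc : (x 2 * y 2) + (x 3 + x 2) * (y 3) ≠ 0 := by intro h; apply h2; linear_combination h
  have hrw : (fun s => t1 x (Function.update y 3 s)) =
      (fun s => ((x 2 * y 2 * (x 2 * y 2 + x 1 * (y 1 + y 2))) + (x 2 * y 2 * (x 3 + x 2 + x 1)) * s + (0) * s ^ 2) / (((x 2 * y 2 + x 1 * (y 1 + y 2)) + (0) * s) * ((x 2 * y 2) + (x 3 + x 2) * s))) := by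
    funext s
    simp [t1, Function.update_apply]
    try ring
  unfold pdY
  rw [hrw, dq _ _ _ _ _ _ _ _ hb hc]


private lemma pdX_t7_4 (x y : ℕ → ℝ) (h3 : x 5 * y 5 + x 4 * (y 4 + y 5) ≠ 0) (h4 : x 6 * y 6 + x 5 * (y 5 + y 6) ≠ 0) :
    pdX t7 4 x y =
      ((x 5 * y 5 * (y 4 + y 5 + y 6) + 2 * (0) * (x 4)) * ((x 5 * y 5 + (y 4 + y 5) * (x 4)) * (x 6 * y 6 + x 5 * (y 5 + y 6) + (0) * (x 4)))
        - (x 5 * y 5 * (x 6 * y 6 + x 5 * (y 5 + y 6)) + (x 5 * y 5 * (y 4 + y 5 + y 6)) * (x 4) + (0) * (x 4) ^ 2) * ((y 4 + y 5) * (x 6 * y 6 + x 5 * (y 5 + y 6) + (0) * (x 4)) + (x 5 * y 5 + (y 4 + y 5) * (x 4)) * (0)))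
        / ((x 5 * y 5 + (y 4 + y 5) * (x 4)) * (x 6 * y 6 + x 5 * (y 5 + y 6) + (0) * (x 4))) ^ 2 := by
  have hb : (x 5 * y 5) + (y 4 + y 5) * (x 4) ≠ 0 := by intro h; apply h3; linear_combination h
  have hc : (x 6 * y 6 + x 5 * (y 5 + y 6)) + (0) * (x 4) ≠ 0 := by intro h; apply h4; linear_combination h
  have hrw : (fun s => t7 (Function.update x 4 s) y) =
      (fun s => ((x 5 * y 5 * (x 6 * y 6 + x 5 * (y 5 + y 6))) + (x 5 * y 5 * (y 4 + y 5 + y 6)) * s + (0) * s ^ 2) / (((x 5 * y 5) + (y 4 + y 5) * s) * ((x 6 * y 6 + x 5 * (y 5 + y 6)) + (0) * s))) := by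
    funext s
    simp [t7, Function.update_apply]
    try ring
  unfold pdX
  rw [hrw, dq _ _ _ _ _ _ _ _ hb hc]


private lemma pdX_t7_5 (x y : ℕ → ℝ) (h3 : x 5 * y 5 + x 4 * (y 4 + y 5) ≠ 0) (h4 : x 6 * y 6 + x 5 * (y 5 + y 6) ≠ 0) :
    pdX t7 5 x y =
      ((y 5 * (x 6 * y 6 + x 4 * (y 4 + y 5 + y 6)) + 2 * (y 5 * (y 5 + y 6)) * (x 5)) * ((x 4 * (y 4 + y 5) + (y 5) * (x 5)) * (x 6 * y 6 + (y 5 + y 6) * (x 5)))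
        - (0 + (y 5 * (x 6 * y 6 + x 4 * (y 4 + y 5 + y 6))) * (x 5) + (y 5 * (y 5 + y 6)) * (x 5) ^ 2) * ((y 5) * (x 6 * y 6 + (y 5 + y 6) * (x 5)) + (x 4 * (y 4 + y 5) + (y 5) * (x 5)) * (y 5 + y 6)))
        / ((x 4 * (y 4 + y 5) + (y 5) * (x 5)) * (x 6 * y 6 + (y 5 + y 6) * (x 5))) ^ 2 := by
  have hb : (x 4 * (y 4 + y 5)) + (y 5) * (x 5) ≠ 0 := by intro h; apply h3; linear_combination h
  have hc : (x 6 * y 6) + (y 5 + y 6) * (x 5) ≠ 0 := by intro h; apply h4; linear_combination h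
  have hrw : (fun s => t7 (Function.update x 5 s) y) =
      (fun s => ((0) + (y 5 * (x 6 * y 6 + x 4 * (y 4 + y 5 + y 6))) * s + (y 5 * (y 5 + y 6)) * s ^ 2) / (((x 4 * (y 4 + y 5)) + (y 5) * s) * ((x 6 * y 6) + (y 5 + y 6) * s))) := by
    funext s
    simp [t7, Function.update_apply]
    try ring
  unfold pdX
  rw [hrw, dq _ _ _ _ _ _ _ _ hb hc]


private lemma pdX_t7_6 (x y : ℕ → ℝ) (h3 : x 5 * y 5 + x 4 * (y 4 + y 5) ≠ 0) (h4 : x 6 * y 6 + x 5 * (y 5 + y 6) ≠ 0) :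
    pdX t7 6 x y =
      ((x 5 * y 5 * y 6 + 2 * (0) * (x 6)) * ((x 5 * y 5 + x 4 * (y 4 + y 5) + (0) * (x 6)) * (x 5 * (y 5 + y 6) + (y 6) * (x 6)))
        - (x 5 * y 5 * (x 5 * (y 5 + y 6) + x 4 * (y 4 + y 5 + y 6)) + (x 5 * y 5 * y 6) * (x 6) + (0) * (x 6) ^ 2) * ((0) * (x 5 * (y 5 + y 6) + (y 6) * (x 6)) + (x 5 * y 5 + x 4 * (y 4 + y 5) + (0) * (x 6)) * (y 6)))
        / ((x 5 * y 5 + x 4 * (y 4 + y 5) + (0) * (x 6)) * (x 5 * (y 5 + y 6) + (y 6) * (x 6))) ^ 2 := by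
  have hb : (x 5 * y 5 + x 4 * (y 4 + y 5)) + (0) * (x 6) ≠ 0 := by intro h; apply h3; linear_combination h
  have hc : (x 5 * (y 5 + y 6)) + (y 6) * (x 6) ≠ 0 := by intro h; apply h4; linear_combination h
  have hrw : (fun s => t7 (Function.update x 6 s) y) =
      (fun s => ((x 5 * y 5 * (x 5 * (y 5 + y 6) + x 4 * (y 4 + y 5 + y 6))) + (x 5 * y 5 * y 6) * s + (0) * s ^ 2) / (((x 5 * y 5 + x 4 * (y 4 + y 5)) + (0) * s) * ((x 5 * (y 5 + y 6)) + (y 6) * s))) := by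
    funext s
    simp [t7, Function.update_apply]
    try ring
  unfold pdX
  rw [hrw, dq _ _ _ _ _ _ _ _ hb hc]


private lemma pdY_t7_4 (x y : ℕ → ℝ) (h3 : x 5 * y 5 + x 4 * (y 4 + y 5) ≠ 0) (h4 : x 6 * y 6 + x 5 * (y 5 + y 6) ≠ 0) :
    pdY t7 4 x y =
      ((x 5 * y 5 * x 4 + 2 * (0) * (y 4)) * ((x 5 * y 5 + x 4 * y 5 + (x 4) * (y 4)) * (x 6 * y 6 + x 5 * (y 5 + y 6) + (0) * (y 4)))
        - (x 5 * y 5 * (x 6 * y 6 + x 5 * (y 5 + y 6) + x 4 * (y 5 + y 6)) + (x 5 * y 5 * x 4) * (y 4) + (0) * (y 4) ^ 2) * ((x 4) * (x 6 * y 6 + x 5 * (y 5 + y 6) + (0) * (y 4)) + (x 5 * y 5 + x 4 * y 5 + (x 4) * (y 4)) * (0)))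
        / ((x 5 * y 5 + x 4 * y 5 + (x 4) * (y 4)) * (x 6 * y 6 + x 5 * (y 5 + y 6) + (0) * (y 4))) ^ 2 := by
  have hb : (x 5 * y 5 + x 4 * y 5) + (x 4) * (y 4) ≠ 0 := by intro h; apply h3; linear_combination h
  have hc : (x 6 * y 6 + x 5 * (y 5 + y 6)) + (0) * (y 4) ≠ 0 := by intro h; apply h4; linear_combination h
  have hrw : (fun s => t7 x (Function.update y 4 s)) =
      (fun s => ((x 5 * y 5 * (x 6 * y 6 + x 5 * (y 5 + y 6) + x 4 * (y 5 + y 6))) + (x 5 * y 5 * x 4) * s + (0) * s ^ 2) / (((x 5 * y 5 + x 4 * y 5) + (x 4) * s) * ((x 6 * y 6 + x 5 * (y 5 + y 6)) + (0) * s))) := by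
    funext s
    simp [t7, Function.update_apply]
    try ring
  unfold pdY
  rw [hrw, dq _ _ _ _ _ _ _ _ hb hc]


private lemma pdY_t7_5 (x y : ℕ → ℝ) (h3 : x 5 * y 5 + x 4 * (y 4 + y 5) ≠ 0) (h4 : x 6 * y 6 + x 5 * (y 5 + y 6) ≠ 0) :
    pdY t7 5 x y =
      ((x 5 * (x 6 * y 6 + x 5 * y 6 + x 4 * (y 4 + y 6)) + 2 * (x 5 * (x 5 + x 4)) * (y 5)) * ((x 4 * y 4 + (x 5 + x 4) * (y 5)) * (x 6 * y 6 + x 5 * y 6 + (x 5) * (y 5)))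
        - (0 + (x 5 * (x 6 * y 6 + x 5 * y 6 + x 4 * (y 4 + y 6))) * (y 5) + (x 5 * (x 5 + x 4)) * (y 5) ^ 2) * ((x 5 + x 4) * (x 6 * y 6 + x 5 * y 6 + (x 5) * (y 5)) + (x 4 * y 4 + (x 5 + x 4) * (y 5)) * (x 5)))
        / ((x 4 * y 4 + (x 5 + x 4) * (y 5)) * (x 6 * y 6 + x 5 * y 6 + (x 5) * (y 5))) ^ 2 := by
  have hb : (x 4 * y 4) + (x 5 + x 4) * (y 5) ≠ 0 := by intro h; apply h3; linear_combination h
  have hc : (x 6 * y 6 + x 5 * y 6) + (x 5) * (y 5) ≠ 0 := by intro h; apply h4; linear_combination h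
  have hrw : (fun s => t7 x (Function.update y 5 s)) =
      (fun s => ((0) + (x 5 * (x 6 * y 6 + x 5 * y 6 + x 4 * (y 4 + y 6))) * s + (x 5 * (x 5 + x 4)) * s ^ 2) / (((x 4 * y 4) + (x 5 + x 4) * s) * ((x 6 * y 6 + x 5 * y 6) + (x 5) * s))) := by
    funext s
    simp [t7, Function.update_apply]
    try ring
  unfold pdY
  rw [hrw, dq _ _ _ _ _ _ _ _ hb hc]


private lemma pdY_t7_6 (x y : ℕ → ℝ) (h3 : x 5 * y 5 + x 4 * (y 4 + y 5) ≠ 0) (h4 : x 6 * y 6 + x 5 * (y 5 + y 6) ≠ 0) :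
    pdY t7 6 x y =
      ((x 5 * y 5 * (x 6 + x 5 + x 4) + 2 * (0) * (y 6)) * ((x 5 * y 5 + x 4 * (y 4 + y 5) + (0) * (y 6)) * (x 5 * y 5 + (x 6 + x 5) * (y 6)))
        - (x 5 * y 5 * (x 5 * y 5 + x 4 * (y 4 + y 5)) + (x 5 * y 5 * (x 6 + x 5 + x 4)) * (y 6) + (0) * (y 6) ^ 2) * ((0) * (x 5 * y 5 + (x 6 + x 5) * (y 6)) + (x 5 * y 5 + x 4 * (y 4 + y 5) + (0) * (y 6)) * (x 6 + x 5)))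
        / ((x 5 * y 5 + x 4 * (y 4 + y 5) + (0) * (y 6)) * (x 5 * y 5 + (x 6 + x 5) * (y 6))) ^ 2 := by
  have hb : (x 5 * y 5 + x 4 * (y 4 + y 5)) + (0) * (y 6) ≠ 0 := by intro h; apply h3; linear_combination h
  have hc : (x 5 * y 5) + (x 6 + x 5) * (y 6) ≠ 0 := by intro h; apply h4; linear_combination h
  have hrw : (fun s => t7 x (Function.update y 6 s)) =
      (fun s => ((x 5 * y 5 * (x 5 * y 5 + x 4 * (y 4 + y 5))) + (x 5 * y 5 * (x 6 + x 5 + x 4)) * s + (0) * s ^ 2) / (((x 5 * y 5 + x 4 * (y 4 + y 5)) + (0) * s) * ((x 5 * y 5) + (x 6 + x 5) * s))) := by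
    funext s
    simp [t7, Function.update_apply]
    try ring
  unfold pdY
  rw [hrw, dq _ _ _ _ _ _ _ _ hb hc]

private lemma pdX_t1_0 (x y : ℕ → ℝ) : pdX t1 0 x y = 0 := by
  have hrw : (fun s => t1 (Function.update x 0 s) y) = fun _ => t1 x y := by
    funext s
    simp [t1, Function.update_apply]
  unfold pdX
  rw [hrw, deriv_const]


private lemma pdX_t1_4 (x y : ℕ → ℝ) : pdX t1 4 x y = 0 := by
  have hrw : (fun s => t1 (Function.update x 4 s) y) = fun _ => t1 x y := by
    funext s
    simp [t1, Function.update_apply]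
  unfold pdX
  rw [hrw, deriv_const]


private lemma pdX_t1_5 (x y : ℕ → ℝ) : pdX t1 5 x y = 0 := by
  have hrw : (fun s => t1 (Function.update x 5 s) y) = fun _ => t1 x y := by
    funext s
    simp [t1, Function.update_apply]
  unfold pdX
  rw [hrw, deriv_const]


private lemma pdX_t1_6 (x y : ℕ → ℝ) : pdX t1 6 x y = 0 := by
  have hrw : (fun s => t1 (Function.update x 6 s) y) = fun _ => t1 x y := by
    funext s
    simp [t1, Function.update_apply]
  unfold pdX
  rw [hrw, deriv_const]


private lemma pdY_t1_0 (x y : ℕ → ℝ) : pdY t1 0 x y = 0 := by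
  have hrw : (fun s => t1 x (Function.update y 0 s)) = fun _ => t1 x y := by
    funext s
    simp [t1, Function.update_apply]
  unfold pdY
  rw [hrw, deriv_const]


private lemma pdY_t1_4 (x y : ℕ → ℝ) : pdY t1 4 x y = 0 := by
  have hrw : (fun s => t1 x (Function.update y 4 s)) = fun _ => t1 x y := by
    funext s
    simp [t1, Function.update_apply]
  unfold pdY
  rw [hrw, deriv_const]


private lemma pdY_t1_5 (x y : ℕ → ℝ) : pdY t1 5 x y = 0 := by
  have hrw : (fun s => t1 x (Function.update y 5 s)) = fun _ => t1 x y := by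
    funext s
    simp [t1, Function.update_apply]
  unfold pdY
  rw [hrw, deriv_const]


private lemma pdY_t1_6 (x y : ℕ → ℝ) : pdY t1 6 x y = 0 := by
  have hrw : (fun s => t1 x (Function.update y 6 s)) = fun _ => t1 x y := by
    funext s
    simp [t1, Function.update_apply]
  unfold pdY
  rw [hrw, deriv_const]


private lemma pdX_t7_0 (x y : ℕ → ℝ) : pdX t7 0 x y = 0 := by
  have hrw : (fun s => t7 (Function.update x 0 s) y) = fun _ => t7 x y := by
    funext s
    simp [t7, Function.update_apply]
  unfold pdX
  rw [hrw, deriv_const]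


private lemma pdX_t7_1 (x y : ℕ → ℝ) : pdX t7 1 x y = 0 := by
  have hrw : (fun s => t7 (Function.update x 1 s) y) = fun _ => t7 x y := by
    funext s
    simp [t7, Function.update_apply]
  unfold pdX
  rw [hrw, deriv_const]


private lemma pdX_t7_2 (x y : ℕ → ℝ) : pdX t7 2 x y = 0 := by
  have hrw : (fun s => t7 (Function.update x 2 s) y) = fun _ => t7 x y := by
    funext s
    simp [t7, Function.update_apply]
  unfold pdX
  rw [hrw, deriv_const]


private lemma pdX_t7_3 (x y : ℕ → ℝ) : pdX t7 3 x y = 0 := by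
  have hrw : (fun s => t7 (Function.update x 3 s) y) = fun _ => t7 x y := by
    funext s
    simp [t7, Function.update_apply]
  unfold pdX
  rw [hrw, deriv_const]


private lemma pdY_t7_0 (x y : ℕ → ℝ) : pdY t7 0 x y = 0 := by
  have hrw : (fun s => t7 x (Function.update y 0 s)) = fun _ => t7 x y := by
    funext s
    simp [t7, Function.update_apply]
  unfold pdY
  rw [hrw, deriv_const]


private lemma pdY_t7_1 (x y : ℕ → ℝ) : pdY t7 1 x y = 0 := by
  have hrw : (fun s => t7 x (Function.update y 1 s)) = fun _ => t7 x y := by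
    funext s
    simp [t7, Function.update_apply]
  unfold pdY
  rw [hrw, deriv_const]


private lemma pdY_t7_2 (x y : ℕ → ℝ) : pdY t7 2 x y = 0 := by
  have hrw : (fun s => t7 x (Function.update y 2 s)) = fun _ => t7 x y := by
    funext s
    simp [t7, Function.update_apply]
  unfold pdY
  rw [hrw, deriv_const]


private lemma pdY_t7_3 (x y : ℕ → ℝ) : pdY t7 3 x y = 0 := by
  have hrw : (fun s => t7 x (Function.update y 3 s)) = fun _ => t7 x y := by
    funext s
    simp [t7, Function.update_apply]
  unfold pdY
  rw [hrw, deriv_const]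

/-- Locality for `sl₃`: `{τ₁,τ₇} = 0`. -/
theorem stmt_15 (x y : ℕ → ℝ)
    (h1 : x 2 * y 2 + x 1 * (y 1 + y 2) ≠ 0)
    (h2 : x 3 * y 3 + x 2 * (y 2 + y 3) ≠ 0)
    (h3 : x 5 * y 5 + x 4 * (y 4 + y 5) ≠ 0)
    (h4 : x 6 * y 6 + x 5 * (y 5 + y 6) ≠ 0) :
    pbXY 7 t1 t7 x y = 0 := by
  simp only [pbXY, Finset.sum_range_succ, Finset.sum_range_zero]
  norm_num
  simp only [pdX_t1_0 x y, pdX_t1_4 x y, pdX_t1_5 x y, pdX_t1_6 x y, pdY_t1_0 x y, pdY_t1_4 x y, pdY_t1_5 x y, pdY_t1_6 x y, pdX_t7_0 x y, pdX_t7_1 x y, pdX_t7_2 x y, pdX_t7_3 x y, pdY_t7_0 x y, pdY_t7_1 x y, pdY_t7_2 x y, pdY_t7_3 x y, pdX_t1_1 x y h1 h2, pdX_t1_2 x y h1 h2, pdX_t1_3 x y h1 h2, pdY_t1_1 x y h1 h2, pdY_t1_2 x y h1 h2, pdY_t1_3 x y h1 h2, pdX_t7_4 x y h3 h4, pdX_t7_5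 x y h3 h4, pdX_t7_6 x y h3 h4, pdY_t7_4 x y h3 h4, pdY_t7_5 x y h3 h4, pdY_t7_6 x y h3 h4]
  ring
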